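/- The need-adjusted serial rule φ^s, defined by φ^s_i(M,r,z) = z_i + Σ_{j≤i} (r_j - z_j)/(m - j + 1) for all i in M = {1,...,m}, is a valid rule: it produces nonnegative allocations satisfying balance Σ_i φ^s_i = Σ_i r_i, and satisfies needs lower bound φ^s_i ≥ z_i. -/

import Mathlib

/-- The need-adjusted serial rule on the hierarchy `{0, ..., m-1}`
(agent `m-1` is the top-ranked agent): each agent keeps his need and shares
his surplus equally with himself and all his superiors. -/
noncomputable def serialRule (m : ℕ) (r z : ℕ → ℝ) (i : ℕ) : ℝ :=
  z i + ∑ j ∈ Finset.range (i + 1), (r j - z j) / ((m - j : ℕ) : ℝ)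

private lemma sum_triangle (m : ℕ) (f : ℕ → ℝ) :
    ∑ i ∈ Finset.range m, ∑ j ∈ Finset.range (i + 1), f j
      = ∑ j ∈ Finset.range m, ((m - j : ℕ) : ℝ) * f j := by
  induction m with
  | zero => simp
  | succ n ih =>
      rw [Finset.sum_range_succ, ih, Finset.sum_range_succ, Finset.sum_range_succ]
      have h2 : ∀ j ∈ Finset.range n,
          ((n + 1 - j : ℕ) : ℝ) * f j = ((n - j : ℕ) : ℝ) * f j + f j := by
        intro j hj
        have hjn : j ≤ n := le_of_lt (Finset.mem_range.mp hj)
        have : (n + 1 - j : ℕ) = (n - j) + 1 := by omega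
        rw [this]
        push_cast
        ring
      rw [Finset.sum_congr rfl h2, Finset.sum_add_distrib]
      simp
      ring

theorem serial_rule_is_valid_rule
    (m : ℕ) (hm : 1 ≤ m) (r z : ℕ → ℝ)
    (hval : ∀ i < m, 0 ≤ z i ∧ z i ≤ r i) :
    (∀ i < m, 0 ≤ serialRule m r z i) ∧
    (∑ i ∈ Finset.range m, serialRule m r z i = ∑ i ∈ Finset.range m, r i) ∧
    (∀ i < m, z i ≤ serialRule m r z i) := by
  have key : ∀ i < m, z i ≤ serialRule m r z i := by
    intro i hi
    unfold serialRule
    have : 0 ≤ ∑ j ∈ Finset.range (i + 1), (r j - z j) / ((m - j : ℕ) : ℝ) := by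
      apply Finset.sum_nonneg
      intro j hj
      have hjm : j < m := lt_of_lt_of_le (Finset.mem_range.mp hj) hi
      have := hval j hjm
      apply div_nonneg (by linarith [this.2])
      positivity
    linarith
  refine ⟨fun i hi => le_trans (hval i hi).1 (key i hi), ?_, key⟩
  unfold serialRule
  rw [Finset.sum_add_distrib, sum_triangle]
  have h : ∀ j ∈ Finset.range m,
      ((m - j : ℕ) : ℝ) * ((r j - z j) / ((m - j : ℕ) : ℝ)) = r j - z j := by
    intro j hj
    have hjm : j < m := Finset.mem_range.mp hj
    have hne : ((m - j : ℕ) : ℝ) ≠ 0 := by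
      have : 0 < m - j := by omega
      positivity
    field_simp
  rw [Finset.sum_congr rfl h]
  rw [Finset.sum_sub_distrib]
  ring
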